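/- arXiv:1207.2997 — 7 statements merged into one kernel-verified Lean document; each statement's English description precedes it below -/
import Mathlib

section
/- If a topological vector space X has the Banach–Steinhaus property (every pointwise-bounded subset of the topological dual X* is equicontinuous), then every absorbing, convex, weakly-closed subset of X is a neighborhood of 0. -/
open Topology Set

noncomputable section

variable {X : Type*} [AddCommGroup X] [Module ℝ X] [TopologicalSpace X]

/-- pointwise-bounded subset of the dual -/
def PtwBounded (B : Set (X →L[ℝ] ℝ)) : Prop :=
  ∀ x : X, ∃ M : ℝ, ∀ f ∈ B, |f x| ≤ M

/-- equicontinuous: contained in the polar of a neighborhood of 0 -/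
def Equicont (B : Set (X →L[ℝ] ℝ)) : Prop :=
  ∃ V ∈ 𝓝 (0 : X), ∀ f ∈ B, ∀ x ∈ V, |f x| ≤ 1

variable (X) in
/-- Banach–Steinhaus property -/
def BSProp : Prop := ∀ B : Set (X →L[ℝ] ℝ), PtwBounded B → Equicont B

variable (X) in
/-- the weak topology on X -/
def weakTop : TopologicalSpace X :=
  TopologicalSpace.induced (fun x => fun f : X →L[ℝ] ℝ => f x) inferInstance

def WeaklyClosed (C : Set X) : Prop := @IsClosed X (weakTop X) C

def WeakLSC (f : X → EReal) : Prop := @LowerSemicontinuous X EReal (weakTop X) _ f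

/-- algebraic interior -/
def core (A : Set X) : Set X :=
  {a | ∀ x : X, ∃ μ > (0:ℝ), ∀ l : ℝ, 0 ≤ l → l ≤ μ → a + l • x ∈ A}

/-- Fitzpatrick function of a multifunction given by its graph -/
def fitz (T : Set (X × (X →L[ℝ] ℝ))) (z : X × (X →L[ℝ] ℝ)) : EReal :=
  ⨆ p : T, ((z.2 p.1.1 + p.1.2 z.1 - p.1.2 p.1.1 : ℝ) : EReal)

def fitzDom (T : Set (X × (X →L[ℝ] ℝ))) : Set (X × (X →L[ℝ] ℝ)) :=
  {z | fitz T z < ⊤}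

/-- local boundedness of a multifunction at a point -/
def LocBddAt (T : Set (X × (X →L[ℝ] ℝ))) (x₀ : X) : Prop :=
  ∃ U ∈ 𝓝 x₀, Equicont {g | ∃ p ∈ T, p.1 ∈ U ∧ p.2 = g}

/-- ε-monotone operator -/
def EMonotone (ε : ℝ) (T : Set (X × (X →L[ℝ] ℝ))) : Prop :=
  ∀ p ∈ T, ∀ q ∈ T, -ε ≤ p.2 p.1 - p.2 q.1 - q.2 p.1 + q.2 q.1

/-- ε-maximal monotone operator -/
def MaxEMonotone (ε : ℝ) (T : Set (X × (X →L[ℝ] ℝ))) : Prop :=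
  T.Nonempty ∧ EMonotone ε T ∧ ∀ S, EMonotone ε S → T ⊆ S → S = T

/-- support function with values in EReal -/
def sigmaE (B : Set (X →L[ℝ] ℝ)) (x : X) : EReal := ⨆ f : B, ((f.1 x : ℝ) : EReal)

/-- real-valued support function -/
def sigmaR (B : Set (X →L[ℝ] ℝ)) (x : X) : ℝ := ⨆ f : B, f.1 x

/-- ε-subdifferential of a real-valued function -/
def esubdiff (ε : ℝ) (f : X → ℝ) (x : X) : Set (X →L[ℝ] ℝ) :=
  {g | ∀ x' : X, g (x' - x) + f x ≤ f x' + ε}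

/-- convexity for EReal-valued functions -/
def ConvexFnE (f : X → EReal) : Prop :=
  ∀ x y : X, ∀ a b : ℝ, 0 ≤ a → 0 ≤ b → a + b = 1 →
    f (a • x + b • y) ≤ (a : EReal) * f x + (b : EReal) * f y

/-- proper EReal-valued function -/
def ProperE (f : X → EReal) : Prop := (∃ x, f x < ⊤) ∧ ∀ x, f x ≠ ⊥

variable (X) in
/-- barreledness: every convex closed absorbing set is a neighborhood of 0 -/
def BarrelProp : Prop :=
  ∀ C : Set X, Convex ℝ C → IsClosed C → Absorbent ℝ C → C ∈ 𝓝 (0 : X)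


open Pointwise in
lemma weak_sep {X : Type*} [AddCommGroup X] [Module ℝ X] [TopologicalSpace X]
    [IsTopologicalAddGroup X] [ContinuousSMul ℝ X]
    (D : Set X) (hconv : Convex ℝ D) (hcl : @IsClosed X (weakTop X) D) {x : X}
    (hx : x ∉ D) : ∃ (f : X →L[ℝ] ℝ) (u : ℝ), (∀ a ∈ D, f a < u) ∧ u < f x := by
  have hcl' : @IsClosed (WeakBilin (topDualPairing ℝ X).flip)
      (WeakBilin.instTopologicalSpace (topDualPairing ℝ X).flip) D := hcl
  obtain ⟨f, u, hfa, hfx⟩ :=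
    geometric_hahn_banach_closed_point (E := WeakBilin (topDualPairing ℝ X).flip)
      (s := D) (x := x) hconv hcl' hx
  refine ⟨⟨f.toLinearMap, f.continuous.comp (toWeakSpaceCLM ℝ X).continuous⟩, u, hfa, hfx⟩

open Pointwise in
theorem stmt0 [IsTopologicalAddGroup X] [ContinuousSMul ℝ X] (hBS : BSProp X) :
    ∀ C : Set X, Absorbent ℝ C → Convex ℝ C → WeaklyClosed C → C ∈ 𝓝 (0 : X) := by
  intro C hAbs hConv hClosed
  set D : Set X := C ∩ (-C) with hDdef
  have hDabs : Absorbent ℝ D := by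
    intro x
    refine (hAbs x).inter ?_
    have := (hAbs (-x)).neg_neg
    simpa using this
  have hDsymm : ∀ d ∈ D, -d ∈ D := by
    rintro d ⟨h1, h2⟩
    exact ⟨h2, by simpa using h1⟩
  have hDsub : D ⊆ C := inter_subset_left
  -- the polar of D
  set B : Set (X →L[ℝ] ℝ) := {g | ∀ d ∈ D, g d ≤ 1} with hBdef
  have hPtw : PtwBounded B := by
    intro x
    obtain ⟨r, hr0, hr⟩ := (hDabs x).exists_pos
    refine ⟨r, fun g hg => ?_⟩
    have hx : x ∈ r • D := by
      have := hr r (by simpa [Real.norm_eq_abs, abs_of_pos hr0] using le_refl r)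
      exact this rfl
    obtain ⟨d, hd, rfl⟩ := hx
    have h1 : g d ≤ 1 := hg d hd
    have h2 : -g d ≤ 1 := by simpa using hg (-d) (hDsymm d hd)
    have : |g d| ≤ 1 := abs_le.2 ⟨by linarith, h1⟩
    calc |g (r • d)| = r * |g d| := by
          rw [map_smul]; simp [abs_mul, abs_of_pos hr0]
      _ ≤ r * 1 := by nlinarith [abs_nonneg (g d)]
      _ = r := mul_one r
  obtain ⟨V, hV, hVbd⟩ := hBS B hPtw
  refine Filter.mem_of_superset hV (fun x hx => hDsub ?_)
  by_contra hxD
  have hDw : @IsClosed X (weakTop X) D := by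
    letI T : TopologicalSpace (WeakBilin (topDualPairing ℝ X).flip) :=
      WeakBilin.instTopologicalSpace (topDualPairing ℝ X).flip
    have hC' : @IsClosed (WeakBilin (topDualPairing ℝ X).flip) T C := hClosed
    have hneg : @IsClosed X (weakTop X) (-C) := @IsClosed.neg (WeakBilin (topDualPairing ℝ X).flip) T _ _ C hC'
    exact @IsClosed.inter X C (-C) (weakTop X) hClosed hneg
  obtain ⟨f, u, hfd, hfx⟩ := weak_sep D (hConv.inter hConv.neg) hDw hxD
  have hu0 : 0 < u := by
    have h0 : (0 : X) ∈ D := hDabs.zero_mem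
    have := hfd 0 h0
    simpa using this
  -- transfer f to a continuous functional on X
  set g : X →L[ℝ] ℝ := u⁻¹ • f with hgdef
  have hgB : g ∈ B := by
    intro d hd
    have : f d < u := hfd d hd
    have : u⁻¹ * f d ≤ 1 := by
      rw [← div_eq_inv_mul, div_le_one hu0]; exact this.le
    simpa [hgdef] using this
  have h1 : |g x| ≤ 1 := hVbd g hgB x hx
  have h2 : 1 < g x := by
    have : u < f x := hfx
    have h3 : 1 < u⁻¹ * f x := by
      rw [← div_eq_inv_mul, lt_div_iff₀ hu0, one_mul]; exact this
    simpa [hgdef] using h3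
  have := le_abs_self (g x)
  linarith
end
end

section
/- Let X be a topological vector space in which every absorbing, convex, weakly-closed subset is a neighborhood of 0. Then every proper convex weakly lower semicontinuous function f : X → ℝ ∪ {∞} is continuous on the topological interior of its domain, and moreover the topological interior of dom f equals the algebraic interior (core) of dom f. -/
open Topology Set

noncomputable section

variable {X : Type*} [AddCommGroup X] [Module ℝ X] [TopologicalSpace X]

lemma ereal_real {z : EReal} (hb : z ≠ ⊥) {c : ℝ} (hz : z ≤ (c : EReal)) :
    ∃ p : ℝ, z = ↑p ∧ p ≤ c := by
  refine ⟨z.toReal, (EReal.coe_toReal (lt_of_le_of_lt hz (EReal.coe_lt_top c)).ne hb).symm, ?_⟩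
  have h2 := EReal.coe_toReal (lt_of_le_of_lt hz (EReal.coe_lt_top c)).ne hb
  rw [← h2] at hz
  exact EReal.coe_le_coe_iff.1 hz

lemma sublevelConvex (f : X → EReal) (hbot : ∀ x, f x ≠ ⊥) (hconv : ConvexFnE f) (c : ℝ) :
    Convex ℝ {x | f x ≤ (c : EReal)} := by
  intro x hx y hy a b ha hb hab
  simp only [mem_setOf_eq] at hx hy ⊢
  obtain ⟨p, hp, hpc⟩ := ereal_real (hbot x) hx
  obtain ⟨q, hq, hqc⟩ := ereal_real (hbot y) hy
  calc f (a • x + b • y) ≤ (a : EReal) * f x + (b : EReal) * f y := hconv x y a b ha hb hab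
    _ = ((a * p + b * q : ℝ) : EReal) := by
        rw [hp, hq, ← EReal.coe_mul, ← EReal.coe_mul, ← EReal.coe_add]
    _ ≤ (c : EReal) := EReal.coe_le_coe_iff.2 (by
        have hc : a * c + b * c = c := by rw [← add_mul, hab, one_mul]
        nlinarith [mul_le_mul_of_nonneg_left hpc ha, mul_le_mul_of_nonneg_left hqc hb])

lemma weakCont_affine (a : X) (s : ℝ) :
    @Continuous X X (weakTop X) (weakTop X) (fun x => a + s • x) := by
  have hg : ∀ g : X →L[ℝ] ℝ, @Continuous X ℝ (weakTop X) _ (fun x => g x) :=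
    fun g => @Continuous.comp X ((X →L[ℝ] ℝ) → ℝ) ℝ (weakTop X) _ _ _ _
      (continuous_apply g)
      (@continuous_induced_dom X ((X →L[ℝ] ℝ) → ℝ) (fun x (g' : X →L[ℝ] ℝ) => g' x) _)
  refine (@continuous_induced_rng X ((X →L[ℝ] ℝ) → ℝ) X
    (fun x (g' : X →L[ℝ] ℝ) => g' x) (fun x => a + s • x) _ (weakTop X)).2 ?_
  refine @continuous_pi X (X →L[ℝ] ℝ) (fun _ => ℝ) (weakTop X) _ _ (fun g => ?_)
  have heq : (fun x : X => ((fun x (g' : X →L[ℝ] ℝ) => g' x) ∘ (fun x => a + s • x)) x g)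
      = fun x => g a + s * g x := by
    ext x; simp
  rw [heq]
  have houter : Continuous (fun r : ℝ => g a + s * r) := by continuity
  exact @Continuous.comp X ℝ ℝ (weakTop X) _ _ (fun x => g x) (fun r => g a + s * r) houter (hg g)

lemma weaklyClosed_sublevel (f : X → EReal) (hlsc : WeakLSC f) (c : EReal) :
    WeaklyClosed {x | f x ≤ c} :=
  (@lowerSemicontinuous_iff_isClosed_preimage X (weakTop X) EReal _ f).1 hlsc c

lemma weaklyClosed_preimage (a : X) (s : ℝ) {S : Set X} (hS : WeaklyClosed S) :
    WeaklyClosed ((fun x => a + s • x) ⁻¹' S) :=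
  @IsClosed.preimage X X (weakTop X) (weakTop X) _ (weakCont_affine a s) _ hS
lemma key_lemma [IsTopologicalAddGroup X] [ContinuousSMul ℝ X]
    (h : ∀ C : Set X, Absorbent ℝ C → Convex ℝ C → WeaklyClosed C → C ∈ 𝓝 (0 : X))
    (f : X → EReal) (hf : ProperE f) (hconv : ConvexFnE f) (hlsc : WeakLSC f)
    {a : X} (ha : a ∈ core {x | f x < ⊤}) :
    ∃ r : ℝ, f a = ↑r ∧ ∃ C : Set X, C ∈ 𝓝 (0:X) ∧ (∀ x ∈ C, -x ∈ C) ∧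
      ∀ x ∈ C, f (a + x) ≤ ((r + 1 : ℝ) : EReal) := by
  have hbot := hf.2
  have haA : f a < ⊤ := by
    obtain ⟨μ, hμ, hl⟩ := ha 0
    have h0 := hl 0 le_rfl hμ.le
    simpa using h0
  obtain ⟨r, hr⟩ : ∃ r : ℝ, f a = ↑r := ⟨(f a).toReal, (EReal.coe_toReal haA.ne (hbot a)).symm⟩
  set S := {y | f y ≤ ((r+1:ℝ):EReal)} with hS
  have hSconv : Convex ℝ S := sublevelConvex f hbot hconv (r+1)
  have hSw : WeaklyClosed S := weaklyClosed_sublevel f hlsc _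
  set D := (fun x => a + (1:ℝ) • x) ⁻¹' S with hD
  have hDmem : ∀ x, x ∈ D ↔ f (a + x) ≤ ((r+1:ℝ):EReal) := by
    intro x; simp [hD, hS, one_smul]
  have hDw : WeaklyClosed D := weaklyClosed_preimage a 1 hSw
  have hDconv : Convex ℝ D := by
    intro x hx y hy a' b' ha' hb' hab
    have h1 : a + (1:ℝ) • (a' • x + b' • y) = a' • (a + (1:ℝ) • x) + b' • (a + (1:ℝ) • y) := by
      simp only [one_smul]
      rw [smul_add, smul_add, add_add_add_comm, ← add_smul, hab, one_smul]
    show a + (1:ℝ) • (a' • x + b' • y) ∈ S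
    rw [h1]
    exact hSconv hx hy ha' hb' hab
  have hD0 : (0:X) ∈ D := by
    rw [hDmem, add_zero, hr]
    exact EReal.coe_le_coe_iff.2 (by linarith)
  have habs_dir : ∀ x : X, ∃ ν : ℝ, 0 < ν ∧ ν • x ∈ D := by
    intro x
    obtain ⟨μ, hμ, hl⟩ := ha x
    have hmem : f (a + μ • x) < ⊤ := hl μ hμ.le le_rfl
    obtain ⟨M, hM⟩ : ∃ M : ℝ, f (a + μ • x) = ↑M :=
      ⟨_, (EReal.coe_toReal hmem.ne (hbot _)).symm⟩
    set t := min 1 (1/(1+|M - r|)) with ht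
    have ht0 : 0 < t := lt_min one_pos (by positivity)
    have ht1 : t ≤ 1 := min_le_left _ _
    have hcomb : (1-t) • a + t • (a + μ • x) = a + (t*μ) • x := by
      rw [smul_add, ← add_assoc, ← add_smul, sub_add_cancel, one_smul, smul_smul]
    have hineq := hconv a (a + μ • x) (1-t) t (by linarith) ht0.le (by ring)
    rw [hcomb, hr, hM] at hineq
    refine ⟨t*μ, by positivity, ?_⟩
    rw [hDmem]
    calc f (a + (t*μ) • x) ≤ ((1-t:ℝ):EReal) * (r:EReal) + (t:EReal) * (M:EReal) := hineq
      _ = (((1-t)*r + t*M : ℝ) : EReal) := by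
          rw [← EReal.coe_mul, ← EReal.coe_mul, ← EReal.coe_add]
      _ ≤ ((r+1:ℝ):EReal) := EReal.coe_le_coe_iff.2 (by
          have h2 : t ≤ 1/(1+|M-r|) := min_le_right _ _
          have h3 : t * (M - r) ≤ t * |M - r| :=
            mul_le_mul_of_nonneg_left (le_abs_self _) ht0.le
          have h4 : t * |M - r| ≤ (1/(1+|M-r|)) * |M-r| :=
            mul_le_mul_of_nonneg_right h2 (abs_nonneg _)
          have h5 : (1/(1+|M-r|)) * |M-r| ≤ 1 := by
            rw [div_mul_eq_mul_div, one_mul, div_le_one (by positivity)]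
            linarith [abs_nonneg (M - r)]
          nlinarith)
  set C := D ∩ {x | -x ∈ D} with hCdef
  have hCsym : ∀ x ∈ C, -x ∈ C := fun x hx => ⟨hx.2, by simpa using hx.1⟩
  have hCbound : ∀ x ∈ C, f (a + x) ≤ ((r+1:ℝ):EReal) := fun x hx => (hDmem x).1 hx.1
  have hC0 : (0:X) ∈ C := ⟨hD0, by simpa using hD0⟩
  have hCconv : Convex ℝ C := by
    have hnegD : {x : X | -x ∈ D} = -D := by ext z; simp [Set.mem_neg]
    exact hDconv.inter (hnegD ▸ hDconv.neg)
  have hCw : WeaklyClosed C := by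
    have hnegD : {x : X | -x ∈ D} = (fun x => (0:X) + (-1:ℝ) • x) ⁻¹' D := by
      ext z; simp [neg_smul, one_smul]
    exact @IsClosed.inter X D {x | -x ∈ D} (weakTop X) hDw (hnegD ▸ weaklyClosed_preimage 0 (-1) hDw)
  have hshrink : ∀ y ∈ D, ∀ s : ℝ, 0 ≤ s → s ≤ 1 → s • y ∈ D :=
    fun y hy s h0 h1 => hDconv.smul_mem_of_zero_mem hD0 hy ⟨h0, h1⟩
  have hCabs : Absorbent ℝ C := by
    rw [absorbent_iff_forall_absorbs_singleton]
    intro x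
    obtain ⟨ν₁, hν₁, hx1⟩ := habs_dir x
    obtain ⟨ν₂, hν₂, hx2⟩ := habs_dir (-x)
    set ν := min ν₁ ν₂ with hν'
    have hν : 0 < ν := lt_min hν₁ hν₂
    have hν1x : ν • x ∈ D := by
      have he : ν • x = (ν/ν₁) • (ν₁ • x) := by rw [smul_smul, div_mul_cancel₀ _ hν₁.ne']
      rw [he]
      exact hshrink _ hx1 _ (by positivity) ((div_le_one hν₁).2 (min_le_left _ _))
    have hν2x : -(ν • x) ∈ D := by
      have he : -(ν • x) = (ν/ν₂) • (ν₂ • (-x)) := by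
        rw [smul_smul, div_mul_cancel₀ _ hν₂.ne', smul_neg]
      rw [he]
      exact hshrink _ hx2 _ (by positivity) ((div_le_one hν₂).2 (min_le_right _ _))
    have hνC : ν • x ∈ C := ⟨hν1x, hν2x⟩
    have hνC' : -(ν • x) ∈ C := hCsym _ hνC
    rw [absorbs_iff_norm]
    refine ⟨ν⁻¹, fun c hc => ?_⟩
    have hcnorm : ν⁻¹ ≤ |c| := by simpa [Real.norm_eq_abs] using hc
    have hc0 : c ≠ 0 := by
      intro h0
      rw [h0, abs_zero] at hcnorm
      exact absurd hcnorm (not_le.2 (inv_pos.2 hν))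
    rw [Set.singleton_subset_iff, mem_smul_set_iff_inv_smul_mem₀ hc0]
    have habs2 : |c⁻¹| ≤ ν := by
      calc |c⁻¹| = |c|⁻¹ := abs_inv c
        _ ≤ (ν⁻¹)⁻¹ := by
            apply inv_anti₀ (inv_pos.2 hν) hcnorm
        _ = ν := inv_inv ν
    rcases le_or_gt 0 c⁻¹ with hs | hs
    · have he : c⁻¹ • x = (c⁻¹/ν) • (ν • x) := by rw [smul_smul, div_mul_cancel₀ _ hν.ne']
      rw [he]
      exact hCconv.smul_mem_of_zero_mem hC0 hνC
        ⟨by positivity, (div_le_one hν).2 (by rwa [abs_of_nonneg hs] at habs2)⟩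
    · have he : c⁻¹ • x = ((-c⁻¹)/ν) • (-(ν • x)) := by
        rw [smul_neg, smul_smul, div_mul_cancel₀ _ hν.ne', neg_smul, neg_neg]
      rw [he]
      exact hCconv.smul_mem_of_zero_mem hC0 hνC'
        ⟨div_nonneg (neg_nonneg.2 hs.le) hν.le,
         (div_le_one hν).2 (by rwa [abs_of_neg hs] at habs2)⟩
  exact ⟨r, hr, C, h C hCabs hCconv hCw, hCsym, hCbound⟩
open Pointwise

theorem stmt1 [IsTopologicalAddGroup X] [ContinuousSMul ℝ X]
    (h : ∀ C : Set X, Absorbent ℝ C → Convex ℝ C → WeaklyClosed C → C ∈ 𝓝 (0 : X))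
    (f : X → EReal) (hf : ProperE f) (hconv : ConvexFnE f) (hlsc : WeakLSC f) :
    ContinuousOn f (interior {x | f x < ⊤}) ∧
      interior {x | f x < ⊤} = core {x | f x < ⊤} := by
  set A := {x | f x < ⊤} with hA
  have hbot := hf.2
  -- interior ⊆ core
  have hIC : interior A ⊆ core A := by
    intro a haI x
    have hcont : Continuous (fun l : ℝ => a + l • x) :=
      continuous_const.add (continuous_id.smul continuous_const)
    have hopen : IsOpen ((fun l : ℝ => a + l • x) ⁻¹' interior A) :=
      isOpen_interior.preimage hcont
    have h0 : (0:ℝ) ∈ (fun l : ℝ => a + l • x) ⁻¹' interior A := by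
      show a + (0:ℝ) • x ∈ interior A
      rw [zero_smul, add_zero]; exact haI
    obtain ⟨ε, hε, hball⟩ := Metric.isOpen_iff.1 hopen 0 h0
    refine ⟨ε/2, by linarith, fun l hl0 hlμ => interior_subset (hball ?_)⟩
    rw [Metric.mem_ball, Real.dist_eq, sub_zero, abs_of_nonneg hl0]
    linarith
  -- core ⊆ interior
  have hCI : core A ⊆ interior A := by
    intro a haco
    obtain ⟨r, hr, C, hCn, hCsym, hCb⟩ := key_lemma h f hf hconv hlsc haco
    have hca : ContinuousAt (fun x : X => -a + x) a :=
      (continuous_const.add continuous_id).continuousAt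
    have hpre : (fun x : X => -a + x) ⁻¹' C ∈ 𝓝 a :=
      hca.preimage_mem_nhds (by simpa using hCn)
    refine mem_interior_iff_mem_nhds.2 (Filter.mem_of_superset hpre ?_)
    intro x hx
    have hb := hCb _ hx
    rw [add_neg_cancel_left] at hb
    exact lt_of_le_of_lt hb (EReal.coe_lt_top _)
  have hEq : interior A = core A := Subset.antisymm hIC hCI
  refine ⟨?_, hEq⟩
  intro a haI
  have haco : a ∈ core A := hEq ▸ haI
  obtain ⟨r, hr, C, hCn, hCsym, hCb⟩ := key_lemma h f hf hconv hlsc haco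
  have hbounds : ∀ ε : ℝ, 0 < ε → ε ≤ 1 →
      ∀ᶠ x in 𝓝 a, ((r - ε:ℝ):EReal) ≤ f x ∧ f x ≤ ((r + ε:ℝ):EReal) := by
    intro ε hε hε1
    have hscaled : ε • C ∈ 𝓝 (0:X) := by
      have hcont : ContinuousAt (fun x : X => ε⁻¹ • x) 0 :=
        (continuous_const.smul continuous_id).continuousAt
      have heq : ε • C = (fun x : X => ε⁻¹ • x) ⁻¹' C := by
        ext z
        rw [mem_preimage, ← mem_smul_set_iff_inv_smul_mem₀ hε.ne' C z]
      rw [heq]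
      exact hcont.preimage_mem_nhds (by simpa using hCn)
    have hca : ContinuousAt (fun x : X => -a + x) a :=
      (continuous_const.add continuous_id).continuousAt
    have hV : (fun x : X => -a + x) ⁻¹' (ε • C) ∈ 𝓝 a :=
      hca.preimage_mem_nhds (by simpa using hscaled)
    filter_upwards [hV] with x hx
    obtain ⟨c, hc, hcx⟩ := hx
    have hxeq : x = a + ε • c := by
      rw [show ε • c = -a + x from hcx, add_neg_cancel_left]
    obtain ⟨q, hq, hq1⟩ := ereal_real (hbot (a+c)) (hCb c hc)
    have hupper : f x ≤ ((r + ε:ℝ):EReal) := by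
      have hcomb : (1-ε) • a + ε • (a + c) = a + ε • c := by
        rw [smul_add, ← add_assoc, ← add_smul, sub_add_cancel, one_smul]
      have hineq := hconv a (a+c) (1-ε) ε (by linarith) hε.le (by ring)
      rw [hcomb, hr, hq] at hineq
      rw [hxeq]
      calc f (a + ε • c) ≤ ((1-ε:ℝ):EReal) * (r:EReal) + (ε:EReal) * (q:EReal) := hineq
        _ = (((1-ε)*r + ε*q : ℝ):EReal) := by
            rw [← EReal.coe_mul, ← EReal.coe_mul, ← EReal.coe_add]
        _ ≤ _ := EReal.coe_le_coe_iff.2 (by nlinarith)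
    obtain ⟨p, hp, hpup⟩ := ereal_real (hbot x) hupper
    obtain ⟨q', hq', hq'1⟩ := ereal_real (hbot (a + -c)) (hCb (-c) (hCsym c hc))
    have h1ε : (0:ℝ) < 1 + ε := by linarith
    have hlow : ((r - ε:ℝ):EReal) ≤ f x := by
      have hcomb2 : (1/(1+ε)) • (a + ε • c) + (ε/(1+ε)) • (a + -c) = a := by
        match_scalars <;> field_simp <;> ring
      have hineq := hconv (a + ε • c) (a + -c) (1/(1+ε)) (ε/(1+ε))
        (by positivity) (by positivity) (by field_simp)
      have hfp : f (a + ε • c) = (p:EReal) := by rw [← hxeq]; exact hp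
      rw [hcomb2, hr, hq', hfp] at hineq
      have hreal : (r:EReal) ≤ (((1/(1+ε))*p + (ε/(1+ε))*q' : ℝ):EReal) := by
        rw [EReal.coe_add, EReal.coe_mul, EReal.coe_mul]; exact hineq
      have hrr := EReal.coe_le_coe_iff.1 hreal
      rw [hp]
      refine EReal.coe_le_coe_iff.2 ?_
      have h2 : r * (1+ε) ≤ p + ε * q' := by
        have h3 := mul_le_mul_of_nonneg_right hrr h1ε.le
        have h4 : ((1/(1+ε))*p + (ε/(1+ε))*q') * (1+ε) = p + ε * q' := by
          field_simp
        rw [h4] at h3; linarith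
      nlinarith
    exact ⟨hlow, hupper⟩
  have hca : ContinuousAt f a := by
    show Filter.Tendsto f (𝓝 a) (𝓝 (f a))
    rw [hr, tendsto_order]
    constructor
    · intro b hb
      induction b using EReal.rec with
      | bot =>
        filter_upwards [hbounds 1 one_pos le_rfl] with x hx
        exact lt_of_lt_of_le (EReal.bot_lt_coe _) hx.1
      | coe b' =>
        have hb' : b' < r := EReal.coe_lt_coe_iff.1 hb
        have hε : 0 < min 1 ((r - b')/2) := lt_min one_pos (by linarith)
        filter_upwards [hbounds _ hε (min_le_left _ _)] with x hx
        refine lt_of_lt_of_le (EReal.coe_lt_coe_iff.2 ?_) hx.1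
        have := min_le_right 1 ((r - b')/2)
        linarith
      | top => exact absurd hb (by simp)
    · intro b hb
      induction b using EReal.rec with
      | bot => exact absurd hb (by simp)
      | coe b' =>
        have hb' : r < b' := EReal.coe_lt_coe_iff.1 hb
        have hε : 0 < min 1 ((b' - r)/2) := lt_min one_pos (by linarith)
        filter_upwards [hbounds _ hε (min_le_left _ _)] with x hx
        refine lt_of_le_of_lt hx.2 (EReal.coe_lt_coe_iff.2 ?_)
        have := min_le_right 1 ((b' - r)/2)
        linarith
      | top =>
        filter_upwards [hbounds 1 one_pos le_rfl] with x hx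
        exact lt_of_le_of_lt hx.2 (EReal.coe_lt_top _)
  exact hca.continuousWithinAt
end
end

section
/- Let X be a topological vector space such that every proper convex weakly lower semicontinuous function on X that is finite everywhere is continuous at 0. Then X has the Banach–Steinhaus property: every pointwise-bounded subset B of X* is equicontinuous. -/
open Topology Set

noncomputable section

variable {X : Type*} [AddCommGroup X] [Module ℝ X] [TopologicalSpace X]

theorem stmt2 [IsTopologicalAddGroup X] [ContinuousSMul ℝ X]
    (h : ∀ f : X → EReal, ProperE f → ConvexFnE f → WeakLSC f → (∀ x, f x < ⊤) →
      ContinuousAt f 0) :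
    BSProp X := by
  intro B hB
  rcases B.eq_empty_or_nonempty with rfl | ⟨g₀, hg₀⟩
  · exact ⟨univ, Filter.univ_mem, by simp⟩
  set f : X → EReal := fun x => ⨆ g : B, ((|g.1 x| : ℝ) : EReal) with hf
  have hle : ∀ x : X, ∀ g ∈ B, ((|g x| : ℝ) : EReal) ≤ f x := fun x g hg =>
    le_iSup (fun g : B => ((|g.1 x| : ℝ) : EReal)) ⟨g, hg⟩
  have hfin : ∀ x, f x < ⊤ := by
    intro x
    obtain ⟨M, hM⟩ := hB x
    calc f x ≤ ((M : ℝ) : EReal) := iSup_le fun g => EReal.coe_le_coe_iff.2 (hM g.1 g.2)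
    _ < ⊤ := EReal.coe_lt_top M
  have hbot : ∀ x, f x ≠ ⊥ := fun x =>
    ne_bot_of_le_ne_bot (EReal.coe_ne_bot _) (hle x g₀ hg₀)
  have hconv : ConvexFnE f := by
    intro x y a b ha hb hab
    refine iSup_le fun g => ?_
    have h1 : |g.1 (a • x + b • y)| ≤ a * |g.1 x| + b * |g.1 y| := by
      calc |g.1 (a • x + b • y)| = |a * g.1 x + b * g.1 y| := by
            simp [map_add, map_smul, smul_eq_mul]
      _ ≤ |a * g.1 x| + |b * g.1 y| := abs_add_le _ _
      _ = a * |g.1 x| + b * |g.1 y| := by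
            rw [abs_mul, abs_mul, abs_of_nonneg ha, abs_of_nonneg hb]
    calc ((|g.1 (a • x + b • y)| : ℝ) : EReal)
        ≤ ((a * |g.1 x| + b * |g.1 y| : ℝ) : EReal) := EReal.coe_le_coe_iff.2 h1
      _ = (a : EReal) * ((|g.1 x| : ℝ) : EReal) + (b : EReal) * ((|g.1 y| : ℝ) : EReal) := by
            rw [EReal.coe_add, EReal.coe_mul, EReal.coe_mul]
      _ ≤ (a : EReal) * f x + (b : EReal) * f y := by
            gcongr
            · exact hle x g.1 g.2
            · exact hle y g.1 g.2
  have hlsc : WeakLSC f := by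
    have hF : LowerSemicontinuous
        (fun p : (X →L[ℝ] ℝ) → ℝ => ⨆ g : B, ((|p g.1| : ℝ) : EReal)) :=
      lowerSemicontinuous_iSup fun g =>
        (continuous_coe_real_ereal.comp
          (continuous_abs.comp (continuous_apply g.1))).lowerSemicontinuous
    have hφ : @Continuous X ((X →L[ℝ] ℝ) → ℝ) (weakTop X) _ (fun x g => g x) :=
      continuous_induced_dom
    exact @LowerSemicontinuous.comp ((X →L[ℝ] ℝ) → ℝ) EReal X _ (weakTop X) _
      (fun p : (X →L[ℝ] ℝ) → ℝ => ⨆ g : B, ((|p g.1| : ℝ) : EReal)) (fun x g => g x) hF hφ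
  have h0 : f 0 = 0 := by
    apply le_antisymm
    · exact iSup_le fun g => by simp
    · have := hle 0 g₀ hg₀
      simpa using this
  have hc := h f ⟨⟨0, hfin 0⟩, hbot⟩ hconv hlsc hfin
  have hmem : f ⁻¹' (Iio (1 : EReal)) ∈ 𝓝 (0 : X) := by
    apply hc
    rw [h0]
    exact isOpen_Iio.mem_nhds (by norm_num)
  refine ⟨_, hmem, fun g hg x hx => ?_⟩
  have h2 : ((|g x| : ℝ) : EReal) < ((1 : ℝ) : EReal) := by
    calc ((|g x| : ℝ) : EReal) ≤ f x := hle x g hg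
    _ < 1 := hx
  exact (EReal.coe_lt_coe_iff.1 h2).le
end
end

section
/- Let X be a topological vector space such that every multifunction T : X ⇉ X* is locally bounded on the topological interior of Pr_X(dom φ_T). Then X has the Banach–Steinhaus property. -/
open Topology Set

noncomputable section

variable {X : Type*} [AddCommGroup X] [Module ℝ X] [TopologicalSpace X]

theorem stmt10 [IsTopologicalAddGroup X] [ContinuousSMul ℝ X]
    (h : ∀ T : Set (X × (X →L[ℝ] ℝ)), ∀ x₀ ∈ interior (Prod.fst '' fitzDom T),
      LocBddAt T x₀) :
    BSProp X := by
  intro B hB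
  set T : Set (X × (X →L[ℝ] ℝ)) := {(0 : X)} ×ˢ B with hT
  have hdom : fitzDom T = Set.univ := by
    ext z
    simp only [fitzDom, Set.mem_setOf_eq, Set.mem_univ, iff_true]
    obtain ⟨M, hM⟩ := hB z.1
    refine lt_of_le_of_lt (b := (M : EReal)) ?_ (EReal.coe_lt_top M)
    refine iSup_le fun p => ?_
    obtain ⟨hp1, hp2⟩ := p.2
    have h0 : p.1.1 = 0 := hp1
    rw [h0]
    simp only [map_zero, sub_zero, zero_add]
    exact_mod_cast (abs_le.mp (hM _ hp2)).2
  have h0 : (0 : X) ∈ interior (Prod.fst '' fitzDom T) := by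
    rw [hdom]
    have : Prod.fst '' (Set.univ : Set (X × (X →L[ℝ] ℝ))) = Set.univ := by
      ext x
      simp only [Set.image_univ, Set.mem_range, Set.mem_univ, iff_true]
      exact ⟨(x, 0), rfl⟩
    rw [this, interior_univ]
    trivial
  obtain ⟨U, hU, V, hV, hVU⟩ := h T 0 h0
  refine ⟨V, hV, fun f hf x hx => ?_⟩
  refine hVU f ⟨(0, f), ⟨rfl, hf⟩, mem_of_mem_nhds hU, rfl⟩ x hx
end
end

section
/- Let X be a topological vector space and B ⊆ X* pointwise-bounded. Then the subdifferential ∂σ_B of the support function σ_B satisfies φ_{∂σ_B}(x, x*) ≤ σ_B(x) + ι_B̄(x*) in the sense that φ_{∂σ_B}(x, x*) ≤ σ_B(x) for all x ∈ X and x* ∈ B; in particular X × B ⊆ dom φ_{∂σ_B} and Pr_X(dom φ_{∂σ_B}) = X. -/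
open Topology Set

noncomputable section

variable {X : Type*} [AddCommGroup X] [Module ℝ X] [TopologicalSpace X]

theorem stmt14 [IsTopologicalAddGroup X] [ContinuousSMul ℝ X] (B : Set (X →L[ℝ] ℝ)) (hB : PtwBounded B)
    (S : Set (X × (X →L[ℝ] ℝ))) (hS : S = {p | p.2 ∈ esubdiff 0 (sigmaR B) p.1}) :
    (∀ x : X, ∀ g ∈ B, fitz S (x, g) ≤ ((sigmaR B x : ℝ) : EReal)) ∧
      (∀ x : X, ∀ g ∈ B, (x, g) ∈ fitzDom S) ∧
      Prod.fst '' fitzDom S = Set.univ := by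
  have hbdd : ∀ x : X, BddAbove (Set.range fun f : B => f.1 x) := by
    intro x
    obtain ⟨M, hM⟩ := hB x
    exact ⟨M, by rintro r ⟨f, rfl⟩; exact (abs_le.mp (hM f.1 f.2)).2⟩
  have hle : ∀ x : X, ∀ g ∈ B, g x ≤ sigmaR B x := fun x g hg =>
    le_ciSup (hbdd x) (⟨g, hg⟩ : B)
  have hsub : ∀ p ∈ S, ∀ x' : X, p.2 x' - p.2 p.1 + sigmaR B p.1 ≤ sigmaR B x' := by
    intro p hp x'
    rw [hS] at hp
    have h2 := hp x'
    rw [map_sub] at h2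
    linarith
  have h1 : ∀ x : X, ∀ g ∈ B, fitz S (x, g) ≤ ((sigmaR B x : ℝ) : EReal) := by
    intro x g hg
    refine iSup_le fun p => ?_
    have h2 := hsub p.1 p.2 x
    have h3 := hle p.1.1 g hg
    exact EReal.coe_le_coe_iff.mpr (by linarith)
  refine ⟨h1, fun x g hg => lt_of_le_of_lt (h1 x g hg) (EReal.coe_lt_top _), ?_⟩
  rw [Set.eq_univ_iff_forall]
  intro x
  rcases B.eq_empty_or_nonempty with hE | ⟨g, hg⟩
  · refine ⟨(x, 0), ?_, rfl⟩
    have : fitz S (x, 0) ≤ ((0 : ℝ) : EReal) := by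
      refine iSup_le fun p => ?_
      have h2 := hsub p.1 p.2 x
      have hσ : ∀ y : X, sigmaR B y = 0 := by
        intro y
        haveI : IsEmpty B := by rw [hE]; exact Set.isEmpty_coe_sort.mpr rfl
        simpa [sigmaR] using Real.iSup_of_isEmpty (fun f : B => f.1 y)
      rw [hσ, hσ] at h2
      refine EReal.coe_le_coe_iff.mpr ?_
      simp only [ContinuousLinearMap.zero_apply]
      linarith
    exact lt_of_le_of_lt this (EReal.coe_lt_top _)
  · exact ⟨(x, g), lt_of_le_of_lt (h1 x g hg) (EReal.coe_lt_top _), rfl⟩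
end
end

section
/- Let X be a locally convex space such that every maximal monotone operator T : X ⇉ X* is locally bounded on core(conv D(T)). Then X is barreled. -/
open Topology Set

noncomputable section

variable {X : Type*} [AddCommGroup X] [Module ℝ X] [TopologicalSpace X]

open Pointwise

private lemma exists_max_ext (S : Set (X × (X →L[ℝ] ℝ)))
    (hS : S.Nonempty) (hmono : EMonotone 0 S) :
    ∃ T, MaxEMonotone 0 T ∧ S ⊆ T := by
  obtain ⟨T, hST, hTmax⟩ := zorn_subset_nonempty
      {S' : Set (X × (X →L[ℝ] ℝ)) | EMonotone 0 S'}
      (fun c hc hchain hne => by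
        refine ⟨⋃₀ c, ?_, fun s hs => subset_sUnion_of_mem hs⟩
        rintro p ⟨s₁, hs₁, hp⟩ q ⟨s₂, hs₂, hq⟩
        rcases hchain.total hs₁ hs₂ with h12 | h21
        · exact hc hs₂ p (h12 hp) q hq
        · exact hc hs₁ p hp q (h21 hq)) S hmono
  exact ⟨T, ⟨hS.mono hST, hTmax.prop,
    fun S' hS' hTS' => hTmax.eq_of_ge hS' hTS'⟩, hST⟩

theorem stmt15 [IsTopologicalAddGroup X] [ContinuousSMul ℝ X] [LocallyConvexSpace ℝ X]
    (h : ∀ T : Set (X × (X →L[ℝ] ℝ)), MaxEMonotone 0 T →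
      ∀ x ∈ core (convexHull ℝ (Prod.fst '' T)), LocBddAt T x) :
    BarrelProp X := by
  intro C hCconv hCclosed hCabs
  have h0C : (0 : X) ∈ C := hCabs.zero_mem
  by_cases hD : ∃ ℓ : X →L[ℝ] ℝ, ℓ ≠ 0
  · obtain ⟨ℓ, hℓ⟩ := hD
    have hxh : ∃ xh : X, ℓ xh ≠ 0 := by
      by_contra hcon
      push_neg at hcon
      exact hℓ (ContinuousLinearMap.ext fun y => by simpa using hcon y)
    obtain ⟨xh, hxh⟩ := hxh
    set B : Set (X →L[ℝ] ℝ) := {f | ∀ y ∈ C, f y ≤ 1} with hBdef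
    have h0B : (0 : X →L[ℝ] ℝ) ∈ B := fun y _ => by simp
    set S : Set (X × (X →L[ℝ] ℝ)) :=
      {p | (p.1 = 0 ∧ p.2 ∈ B) ∨
        (p.2 = ℓ p.1 • ℓ ∧ ∀ f ∈ B, f p.1 ≤ ℓ p.1 * ℓ p.1)} with hSdef
    have hSmono : EMonotone 0 S := by
      rintro p hp q hq
      rcases hp with ⟨hp1, hp2⟩ | ⟨hp2, hpG⟩ <;>
        rcases hq with ⟨hq1, hq2⟩ | ⟨hq2, hqG⟩
      · simp [hp1, hq1]
      · have h1 := hqG p.2 hp2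
        simp only [hp1, hq2, map_zero, ContinuousLinearMap.smul_apply, smul_eq_mul,
          mul_zero, neg_zero]
        nlinarith
      · have h1 := hpG q.2 hq2
        simp only [hq1, hp2, map_zero, ContinuousLinearMap.smul_apply, smul_eq_mul,
          mul_zero, neg_zero]
        nlinarith
      · simp only [hp2, hq2, ContinuousLinearMap.smul_apply, smul_eq_mul, neg_zero]
        nlinarith [sq_nonneg (ℓ p.1 - ℓ q.1)]
    -- pointwise upper bounds from absorbency
    have hub : ∀ y : X, ∃ M : ℝ, ∀ f ∈ B, f y ≤ M := by
      intro y
      obtain ⟨r, hr⟩ := absorbs_iff_norm.1 (hCabs y)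
      have hc1 : (1 : ℝ) ≤ max r 1 := le_max_right _ _
      have hyc : y ∈ (max r 1) • C := by
        refine hr (max r 1) ?_ rfl
        rw [Real.norm_eq_abs, abs_of_pos (by linarith)]
        exact le_max_left _ _
      obtain ⟨z, hzC, hzy⟩ := hyc
      refine ⟨max r 1, fun f hf => ?_⟩
      rw [← hzy]
      calc f ((max r 1) • z) = (max r 1) * f z := by
            rw [map_smul, smul_eq_mul]
        _ ≤ (max r 1) * 1 := mul_le_mul_of_nonneg_left (hf z hzC) (by linarith)
        _ = max r 1 := mul_one _
    -- points on rays with nonzero ℓ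
    have hGpt : ∀ x : X, ℓ x ≠ 0 → ∃ t₀ : ℝ, 0 < t₀ ∧ ∀ t : ℝ, t₀ ≤ t →
        (t • x, ℓ (t • x) • ℓ) ∈ S := by
      intro x hx
      obtain ⟨M, hM⟩ := hub x
      have hxx : 0 < ℓ x * ℓ x := mul_self_pos.2 hx
      refine ⟨max 1 (M / (ℓ x * ℓ x)), lt_of_lt_of_le one_pos (le_max_left _ _),
        fun t ht => ?_⟩
      have ht1 : (1 : ℝ) ≤ t := le_trans (le_max_left _ _) ht
      have hMt : M ≤ t * (ℓ x * ℓ x) := by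
        have h2 : M / (ℓ x * ℓ x) ≤ t := le_trans (le_max_right _ _) ht
        calc M = (M / (ℓ x * ℓ x)) * (ℓ x * ℓ x) := by field_simp
          _ ≤ t * (ℓ x * ℓ x) := by nlinarith
      right
      refine ⟨rfl, fun f hf => ?_⟩
      have hfx := hM f hf
      simp only [map_smul, smul_eq_mul]
      nlinarith
    -- extend S to a maximal monotone operator
    obtain ⟨T, hTmax, hST⟩ := exists_max_ext S ⟨(0, 0), Or.inl ⟨rfl, h0B⟩⟩ hSmono
    -- 0 belongs to the core of the convex hull of the domain
    have hhull0 : (0 : X) ∈ convexHull ℝ (Prod.fst '' T) :=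
      subset_convexHull ℝ _ ⟨(0, 0), hST (Or.inl ⟨rfl, h0B⟩), rfl⟩
    have hray : ∀ x : X, ∃ t : ℝ, 0 < t ∧ t • x ∈ convexHull ℝ (Prod.fst '' T) := by
      intro x
      by_cases hx : ℓ x = 0
      · have hℓ1 : ℓ (x + xh) ≠ 0 := by simp [map_add, hx, hxh]
        have hℓ2 : ℓ (x - xh) ≠ 0 := by simp [map_sub, hx, hxh]
        obtain ⟨t₁, ht₁, hm₁⟩ := hGpt _ hℓ1
        obtain ⟨t₂, ht₂, hm₂⟩ := hGpt _ hℓ2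
        refine ⟨max t₁ t₂, lt_of_lt_of_le ht₁ (le_max_left _ _), ?_⟩
        have hp₁ : (max t₁ t₂) • (x + xh) ∈ convexHull ℝ (Prod.fst '' T) :=
          subset_convexHull ℝ _ ⟨_, hST (hm₁ _ (le_max_left _ _)), rfl⟩
        have hp₂ : (max t₁ t₂) • (x - xh) ∈ convexHull ℝ (Prod.fst '' T) :=
          subset_convexHull ℝ _ ⟨_, hST (hm₂ _ (le_max_right _ _)), rfl⟩
        have hcomb := (convex_convexHull ℝ (Prod.fst '' T)) hp₁ hp₂
          (by norm_num : (0:ℝ) ≤ 1/2) (by norm_num : (0:ℝ) ≤ 1/2) (by norm_num)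
        have heq : (1/2 : ℝ) • ((max t₁ t₂) • (x + xh)) +
            (1/2 : ℝ) • ((max t₁ t₂) • (x - xh)) = (max t₁ t₂) • x := by
          module
        rwa [heq] at hcomb
      · obtain ⟨t₀, ht₀, hm⟩ := hGpt x hx
        exact ⟨t₀, ht₀, subset_convexHull ℝ _ ⟨_, hST (hm _ le_rfl), rfl⟩⟩
    have hcore : (0 : X) ∈ core (convexHull ℝ (Prod.fst '' T)) := by
      intro x
      obtain ⟨t, ht, hmem⟩ := hray x
      refine ⟨t, ht, fun l hl0 hlt => ?_⟩
      rw [zero_add]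
      have hcomb := (convex_convexHull ℝ (Prod.fst '' T)) hmem hhull0
        (div_nonneg hl0 ht.le) (by rw [sub_nonneg, div_le_one ht]; exact hlt)
        (by ring : l / t + (1 - l / t) = 1)
      have heq : (l / t) • (t • x) + (1 - l / t) • (0 : X) = l • x := by
        rw [smul_zero, add_zero, smul_smul, div_mul_cancel₀ _ ht.ne']
      rwa [heq] at hcomb
    obtain ⟨U, hU, V, hV, hVbd⟩ := h T hTmax 0 hcore
    refine Filter.mem_of_superset hV fun x hxV => ?_
    by_contra hxC
    obtain ⟨g, u, hgu, hux⟩ := geometric_hahn_banach_closed_point hCconv hCclosed hxC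
    have hu0 : 0 < u := by simpa using hgu 0 h0C
    have hfB : u⁻¹ • g ∈ B := by
      intro y hy
      rw [ContinuousLinearMap.smul_apply, smul_eq_mul]
      calc u⁻¹ * g y ≤ u⁻¹ * u :=
            mul_le_mul_of_nonneg_left (hgu y hy).le (inv_nonneg.2 hu0.le)
        _ = 1 := inv_mul_cancel₀ hu0.ne'
    have hbd := hVbd (u⁻¹ • g) ⟨(0, u⁻¹ • g), hST (Or.inl ⟨rfl, hfB⟩),
      mem_of_mem_nhds hU, rfl⟩ x hxV
    have hgt : 1 < (u⁻¹ • g) x := by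
      rw [ContinuousLinearMap.smul_apply, smul_eq_mul]
      calc (1 : ℝ) = u⁻¹ * u := (inv_mul_cancel₀ hu0.ne').symm
        _ < u⁻¹ * g x := by
            exact mul_lt_mul_of_pos_left hux (inv_pos.2 hu0)
    have := (abs_le.1 hbd).2
    linarith
  · push_neg at hD
    have hCuniv : C = univ := by
      refine eq_univ_of_forall fun x => ?_
      by_contra hxC
      obtain ⟨g, u, hgu, hux⟩ := geometric_hahn_banach_closed_point hCconv hCclosed hxC
      have h1 : (0 : ℝ) < u := by simpa using hgu 0 h0C
      rw [hD g] at hux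
      simp at hux
      linarith
    rw [hCuniv]
    exact Filter.univ_mem
end
end

section
/- Let X be a locally convex space and ε ≥ 0 such that every ε-maximal monotone operator T : X ⇉ X* is locally bounded on core(conv D(T)). Then X is barreled. -/
open Topology Set

noncomputable section

variable {X : Type*} [AddCommGroup X] [Module ℝ X] [TopologicalSpace X]

open scoped Pointwise

set_option maxHeartbeats 2000000 in
theorem stmt18 [IsTopologicalAddGroup X] [ContinuousSMul ℝ X] [LocallyConvexSpace ℝ X] (ε : ℝ) (hε : 0 ≤ ε)
    (h : ∀ T : Set (X × (X →L[ℝ] ℝ)), MaxEMonotone ε T →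
      ∀ x ∈ core (convexHull ℝ (Prod.fst '' T)), LocBddAt T x) :
    BarrelProp X := by
  intro C hCc hCcl hCab
  -- extraction from absorbency
  have habs : ∀ y : X, ∃ c : ℝ, 0 < c ∧ y ∈ c • C := by
    intro y
    obtain ⟨r, hr, hspec⟩ := (hCab y).exists_pos
    refine ⟨max r 1, by positivity, ?_⟩
    have h1 : ({y} : Set X) ⊆ (max r 1) • C := by
      apply hspec
      rw [Real.norm_eq_abs, abs_of_nonneg (by positivity)]
      exact le_max_left _ _
    exact Set.singleton_subset_iff.mp h1
  have h0C : (0 : X) ∈ C := by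
    obtain ⟨c, hc, hmem⟩ := habs 0
    obtain ⟨z, hz, hcz⟩ := hmem
    have hz0 : z = 0 := by
      have := hcz
      rcases smul_eq_zero.mp this with h' | h'
      · exact absurd h' hc.ne'
      · exact h'
    rwa [hz0] at hz
  by_cases hall : ∀ v : X, v ∈ C
  · have : C = Set.univ := Set.eq_univ_iff_forall.mpr hall
    rw [this]; exact Filter.univ_mem
  push_neg at hall
  obtain ⟨x₀, hx₀⟩ := hall
  obtain ⟨g, u₀, hgu, hux⟩ := geometric_hahn_banach_closed_point hCc hCcl hx₀
  have hu₀ : (0:ℝ) < u₀ := by simpa using hgu 0 h0C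
  set w : X := x₀ with hw
  have hgw : (0:ℝ) < g w := lt_trans hu₀ hux
  set B : Set (X →L[ℝ] ℝ) := {f | ∀ y ∈ C, f y ≤ 1} with hBdef
  have h0B : (0 : X →L[ℝ] ℝ) ∈ B := by intro y hy; simp
  have hBbdd : ∀ y : X, ∃ M : ℝ, 0 ≤ M ∧ ∀ f ∈ B, |f y| ≤ M := by
    intro y
    obtain ⟨c, hc, hyc⟩ := habs y
    obtain ⟨c', hc', hyc'⟩ := habs (-y)
    obtain ⟨z, hz, hzy⟩ := hyc
    obtain ⟨z', hz', hzy'⟩ := hyc'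
    refine ⟨max c c', le_max_of_le_left hc.le, fun f hf => abs_le.mpr ⟨?_, ?_⟩⟩
    · have hfz' : f z' ≤ 1 := hf z' hz'
      have h1 : f (-y) ≤ c' := by
        rw [← hzy', map_smul, smul_eq_mul]
        nlinarith
      have h2 : -f y ≤ c' := by simpa using h1
      have := le_max_right c c'
      linarith
    · have hfz : f z ≤ 1 := hf z hz
      have h1 : f y ≤ c := by
        rw [← hzy, map_smul, smul_eq_mul]
        nlinarith
      have := le_max_left c c'
      linarith
  set A : Set (X × (X →L[ℝ] ℝ)) :=
    {p | (∀ f ∈ B, f p.1 ≤ g p.1 * g p.1) ∧ p.2 = g p.1 • g} with hAdef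
  set G : Set (X × (X →L[ℝ] ℝ)) := {p | p.1 = 0 ∧ p.2 ∈ B} ∪ A with hGdef
  have h00G : ((0 : X), (0 : X →L[ℝ] ℝ)) ∈ G := Or.inl ⟨rfl, h0B⟩
  have hGmono : EMonotone ε G := by
    rintro p hp q hq
    have key : (0:ℝ) ≤ p.2 p.1 - p.2 q.1 - q.2 p.1 + q.2 q.1 := by
      rcases hp with ⟨hp1, hp2⟩ | ⟨hpB, hpe⟩ <;> rcases hq with ⟨hq1, hq2⟩ | ⟨hqB, hqe⟩
      · have e1 : p.2 p.1 = 0 := by rw [hp1]; exact map_zero _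
        have e2 : p.2 q.1 = 0 := by rw [hq1]; exact map_zero _
        have e3 : q.2 p.1 = 0 := by rw [hp1]; exact map_zero _
        have e4 : q.2 q.1 = 0 := by rw [hq1]; exact map_zero _
        linarith
      · have e1 : p.2 p.1 = 0 := by rw [hp1]; exact map_zero _
        have e3 : q.2 p.1 = 0 := by rw [hp1, hqe]; simp
        have e4 : q.2 q.1 = g q.1 * g q.1 := by rw [hqe]; simp [smul_eq_mul]
        have e2 := hqB p.2 hp2
        linarith
      · have e2 : p.2 q.1 = 0 := by rw [hq1]; exact map_zero _
        have e4 : q.2 q.1 = 0 := by rw [hq1]; exact map_zero _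
        have e1 : p.2 p.1 = g p.1 * g p.1 := by rw [hpe]; simp [smul_eq_mul]
        have e3 : q.2 p.1 ≤ g p.1 * g p.1 := hpB q.2 hq2
        linarith
      · have e1 : p.2 p.1 = g p.1 * g p.1 := by rw [hpe]; simp [smul_eq_mul]
        have e2 : p.2 q.1 = g p.1 * g q.1 := by rw [hpe]; simp [smul_eq_mul]
        have e3 : q.2 p.1 = g q.1 * g p.1 := by rw [hqe]; simp [smul_eq_mul]
        have e4 : q.2 q.1 = g q.1 * g q.1 := by rw [hqe]; simp [smul_eq_mul]
        nlinarith [sq_nonneg (g p.1 - g q.1)]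
    linarith
  obtain ⟨T, hGT, hTmax⟩ := zorn_subset_nonempty
    {S : Set (X × (X →L[ℝ] ℝ)) | EMonotone ε S ∧ G ⊆ S}
    (fun c hcS hchain hcne => by
      obtain ⟨s₀, hs₀⟩ := hcne
      refine ⟨⋃₀ c, ⟨?_, (hcS hs₀).2.trans (Set.subset_sUnion_of_mem hs₀)⟩,
        fun s hs => Set.subset_sUnion_of_mem hs⟩
      rintro p ⟨s₁, hs₁, hp⟩ q ⟨s₂, hs₂, hq⟩
      rcases hchain.total hs₁ hs₂ with hsub | hsub
      · exact (hcS hs₂).1 p (hsub hp) q hq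
      · exact (hcS hs₁).1 p hp q (hsub hq))
    G ⟨hGmono, subset_rfl⟩
  have hTmono : EMonotone ε T := hTmax.1.1
  have hmaxT : MaxEMonotone ε T := by
    refine ⟨⟨_, hGT h00G⟩, hTmono, fun S hS hTS => ?_⟩
    exact Set.Subset.antisymm (hTmax.2 ⟨hS, hGT.trans hTS⟩ hTS) hTS
  have hcore : (0 : X) ∈ core (convexHull ℝ (Prod.fst '' T)) := by
    intro x
    set cc : ℝ := (|g x| + g w) / g w with hcc
    have hccw : cc * g w = |g x| + g w := div_mul_cancel₀ _ hgw.ne'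
    have hplus : g w ≤ g x + cc * g w := by rw [hccw]; linarith [neg_abs_le (g x)]
    have hminus : g w ≤ cc * g w - g x := by rw [hccw]; linarith [le_abs_self (g x)]
    obtain ⟨M₁, hM₁₀, hM₁⟩ := hBbdd (x + cc • w)
    obtain ⟨M₂, hM₂₀, hM₂⟩ := hBbdd (x - cc • w)
    set M : ℝ := max M₁ M₂ with hM
    set R : ℝ := max (M / (g w)^2) 1 with hR
    have hR1 : (1:ℝ) ≤ R := le_max_right _ _
    have hR0 : (0:ℝ) < R := lt_of_lt_of_le one_pos hR1
    have hRM : M ≤ R * (g w)^2 := by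
      have h1 : M / (g w)^2 ≤ R := le_max_left _ _
      have h2 : (0:ℝ) < (g w)^2 := by positivity
      calc M = (M / (g w)^2) * (g w)^2 := by field_simp
      _ ≤ R * (g w)^2 := by nlinarith
    have hmemA : ∀ y : X, ∀ My : ℝ, (∀ f ∈ B, |f y| ≤ My) → My ≤ M → g w ≤ |g y| →
        (R • y, g (R • y) • g) ∈ A := by
      intro y My hMy hMyM hgy
      refine ⟨fun f hf => ?_, rfl⟩
      have e1 : f (R • y) = R * f y := by rw [map_smul, smul_eq_mul]
      have e2 : g (R • y) = R * g y := by rw [map_smul, smul_eq_mul]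
      rw [e1, e2]
      have h1 : f y ≤ M := le_trans (le_trans (le_abs_self _) (hMy f hf)) hMyM
      have h6 : R * f y ≤ R * M := mul_le_mul_of_nonneg_left h1 hR0.le
      have h5 : R * M ≤ R * (R * (g w)^2) := mul_le_mul_of_nonneg_left hRM hR0.le
      have h3 : g w * g w ≤ |g y| * |g y| := mul_self_le_mul_self hgw.le hgy
      rw [abs_mul_abs_self] at h3
      have h4 : R * R * (g w * g w) ≤ R * R * (g y * g y) :=
        mul_le_mul_of_nonneg_left h3 (by positivity)
      nlinarith [h4, h5, h6]
    have hA₁ : (R • (x + cc • w), g (R • (x + cc • w)) • g) ∈ A := by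
      apply hmemA _ M₁ hM₁ (le_max_left _ _)
      have e : g (x + cc • w) = g x + cc * g w := by rw [map_add, map_smul, smul_eq_mul]
      rw [e]
      exact le_trans hplus (le_abs_self _)
    have hA₂ : (R • (x - cc • w), g (R • (x - cc • w)) • g) ∈ A := by
      apply hmemA _ M₂ hM₂ (le_max_right _ _)
      have e : g (x - cc • w) = g x - cc * g w := by rw [map_sub, map_smul, smul_eq_mul]
      rw [e]
      exact le_trans (by linarith : g w ≤ -(g x - cc * g w)) (neg_le_abs _)
    have hD₁ : R • (x + cc • w) ∈ Prod.fst '' T := ⟨_, hGT (Or.inr hA₁), rfl⟩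
    have hD₂ : R • (x - cc • w) ∈ Prod.fst '' T := ⟨_, hGT (Or.inr hA₂), rfl⟩
    have hD0 : (0 : X) ∈ Prod.fst '' T := ⟨_, hGT h00G, rfl⟩
    have hhull := subset_convexHull ℝ (Prod.fst '' T)
    have hconv := convex_convexHull ℝ (Prod.fst '' T)
    have hRx : R • x ∈ convexHull ℝ (Prod.fst '' T) := by
      have hcomb := hconv (hhull hD₁) (hhull hD₂)
        (by norm_num : (0:ℝ) ≤ 1/2) (by norm_num : (0:ℝ) ≤ 1/2) (by norm_num : (1:ℝ)/2 + 1/2 = 1)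
      have heq : (1/2 : ℝ) • (R • (x + cc • w)) + (1/2 : ℝ) • (R • (x - cc • w)) = R • x := by
        module
      rwa [heq] at hcomb
    refine ⟨R, hR0, fun l hl0 hlR => ?_⟩
    have ha : (0:ℝ) ≤ 1 - l / R := by
      rw [sub_nonneg]
      exact (div_le_one hR0).mpr hlR
    have hb : (0:ℝ) ≤ l / R := by positivity
    have hcomb := hconv (hhull hD0) hRx ha hb (by ring : (1 - l / R) + l / R = 1)
    have heq : (1 - l / R) • (0:X) + (l / R) • (R • x) = l • x := by
      rw [smul_zero, zero_add, smul_smul, div_mul_cancel₀ _ hR0.ne']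
    rw [zero_add]
    rwa [heq] at hcomb
  obtain ⟨U, hU, V, hV, hbd⟩ := h T hmaxT 0 hcore
  refine Filter.mem_of_superset hV ?_
  intro v hv
  by_contra hvC
  obtain ⟨f, s, hfs, hsv⟩ := geometric_hahn_banach_closed_point hCc hCcl hvC
  have hs : (0:ℝ) < s := by simpa using hfs 0 h0C
  have hf'B : s⁻¹ • f ∈ B := by
    intro y hy
    have h1 : f y ≤ s := (hfs y hy).le
    have h2 : s⁻¹ * f y ≤ s⁻¹ * s := mul_le_mul_of_nonneg_left h1 (by positivity)
    rw [inv_mul_cancel₀ hs.ne'] at h2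
    simpa [smul_eq_mul] using h2
  have hmem : s⁻¹ • f ∈ {g' | ∃ p ∈ T, p.1 ∈ U ∧ p.2 = g'} :=
    ⟨((0:X), s⁻¹ • f), hGT (Or.inl ⟨rfl, hf'B⟩), mem_of_mem_nhds hU, rfl⟩
  have hle := hbd _ hmem v hv
  have hgt : (1:ℝ) < (s⁻¹ • f) v := by
    have h2 := mul_lt_mul_of_pos_left hsv (inv_pos.mpr hs)
    rw [inv_mul_cancel₀ hs.ne'] at h2
    simpa [smul_eq_mul] using h2
  linarith [le_abs_self ((s⁻¹ • f) v)]
end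
end
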